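/- Assume (1+θ)·∫_{(0,∞)} z dμ_F̂(z) < ∞ and that the topological support of μ_F equals [0,∞). Then for every a > 0 the minimizer of J_a over 𝒜 is unique: if H₁, H₂ ∈ 𝒜 satisfy J_a(H₁) = J_a(H₂) = v(a), then H₁(z) = H₂(z) for all z ≥ 0. -/

import Mathlib

open MeasureTheory Set Filter Topology
open scoped ENNReal

noncomputable section

/-- The admissible set 𝒜: functions `H : [0,∞) → [0,∞)` with `H 0 = 0` that are
nondecreasing and 1-Lipschitz (extended to `ℝ`, with the conditions imposed on `[0,∞)`). -/
def Adm : Set (ℝ → ℝ) :=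
  {H | H 0 = 0 ∧ (∀ z, 0 ≤ z → 0 ≤ H z) ∧ MonotoneOn H (Set.Ici 0) ∧
    LipschitzOnWith 1 H (Set.Ici 0)}

/-- The objective functional
`J_a(H) = ∫_{(0,∞)} ((a/2)·H² + H) dμ_F − (1+θ)·∫_{(0,∞)} H dμ_F̂`, valued in `EReal`. -/
def Jfun (μF μFhat : Measure ℝ) (θ a : ℝ) (H : ℝ → ℝ) : EReal :=
  ((∫⁻ z in Set.Ioi (0:ℝ), ENNReal.ofReal (a / 2 * H z ^ 2 + H z) ∂μF : ℝ≥0∞) : EReal)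
    - ((ENNReal.ofReal (1 + θ) * ∫⁻ z in Set.Ioi (0:ℝ), ENNReal.ofReal (H z) ∂μFhat : ℝ≥0∞) : EReal)

/-- `v(a) = inf_{H ∈ 𝒜} J_a(H)`. -/
def vfun (μF μFhat : Measure ℝ) (θ : ℝ) (a : ℝ) : EReal :=
  ⨅ H ∈ Adm, Jfun μF μFhat θ a H

/-! ### Auxiliary lemmas -/

lemma coe_enn_aux (x : ℝ≥0∞) (hx : x ≠ ⊤) : ((x.toReal : ℝ) : EReal) = (x : EReal) := by
  conv_rhs => rw [← ENNReal.ofReal_toReal hx]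
  rw [EReal.coe_ennreal_ofReal, max_eq_left ENNReal.toReal_nonneg]

lemma ereal_sub_coe_aux (x y : ℝ≥0∞) (hx : x ≠ ⊤) (hy : y ≠ ⊤) :
    (x : EReal) - (y : EReal) = (((x.toReal - y.toReal : ℝ)) : EReal) := by
  rw [EReal.coe_sub, coe_enn_aux x hx, coe_enn_aux y hy]

lemma adm_le_self_aux {H : ℝ → ℝ} (hH : H ∈ Adm) {z : ℝ} (hz : 0 ≤ z) : H z ≤ z := by
  have h := hH.2.2.2.dist_le_mul z hz 0 (le_refl (0:ℝ))
  rw [hH.1, Real.dist_eq, Real.dist_eq, sub_zero, sub_zero, NNReal.coe_one, one_mul] at h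
  calc H z ≤ |H z| := le_abs_self _
    _ ≤ |z| := h
    _ = z := abs_of_nonneg hz

lemma adm_avg_aux {H₁ H₂ : ℝ → ℝ} (h1 : H₁ ∈ Adm) (h2 : H₂ ∈ Adm) :
    (fun z => (H₁ z + H₂ z) / 2) ∈ Adm := by
  obtain ⟨a0, apos, amono, alip⟩ := h1
  obtain ⟨b0, bpos, bmono, blip⟩ := h2
  refine ⟨by simp [a0, b0], fun z hz => by have := apos z hz; have := bpos z hz; positivity,
    fun x hx y hy hxy => by have := amono hx hy hxy; have := bmono hx hy hxy; dsimp; linarith,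
    ?_⟩
  refine LipschitzOnWith.of_dist_le_mul fun x hx y hy => ?_
  have da := alip.dist_le_mul x hx y hy
  have db := blip.dist_le_mul x hx y hy
  rw [Real.dist_eq, Real.dist_eq, NNReal.coe_one, one_mul] at da db
  rw [Real.dist_eq, Real.dist_eq, NNReal.coe_one, one_mul]
  have he : (H₁ x + H₂ x) / 2 - (H₁ y + H₂ y) / 2 = ((H₁ x - H₁ y) + (H₂ x - H₂ y)) / 2 := by
    ring
  rw [he, abs_div, abs_two]
  have habs := abs_add_le (H₁ x - H₁ y) (H₂ x - H₂ y)
  linarith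

lemma zero_mem_adm_aux : (fun _ : ℝ => (0:ℝ)) ∈ Adm := by
  refine ⟨rfl, fun _ _ => le_rfl, fun _ _ _ _ _ => le_rfl, ?_⟩
  refine LipschitzOnWith.of_dist_le_mul fun x _ y _ => ?_
  simp [dist_self]

/-- From a.e. equality on `(0,∞)` plus full support and continuity, deduce equality on `[0,∞)`. -/
lemma eq_of_ae_aux (μF : Measure ℝ)
    (hsupp : ∀ U : Set ℝ, IsOpen U → (U ∩ Set.Ici 0).Nonempty → 0 < μF U)
    {H₁ H₂ : ℝ → ℝ} (c1 : ContinuousOn H₁ (Set.Ici 0)) (c2 : ContinuousOn H₂ (Set.Ici 0))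
    (h0 : H₁ 0 = H₂ 0)
    (hae : ∀ᵐ z ∂μF.restrict (Set.Ioi 0), H₁ z = H₂ z) :
    ∀ z : ℝ, 0 ≤ z → H₁ z = H₂ z := by
  by_contra hc
  push_neg at hc
  obtain ⟨z₀, hz₀, hne⟩ := hc
  have hz0pos : 0 < z₀ := by
    rcases hz₀.lt_or_eq with h | h
    · exact h
    · exact absurd (h ▸ h0) hne
  set f : ℝ → ℝ := fun z => H₁ z - H₂ z with hf
  have cf : ContinuousOn f (Set.Ici 0) := c1.sub c2
  have hfz₀ : f z₀ ≠ 0 := sub_ne_zero.mpr hne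
  have hεpos : 0 < |f z₀| := abs_pos.mpr hfz₀
  obtain ⟨δ, hδpos, hδ⟩ :=
    (Metric.continuousOn_iff.mp cf) z₀ hz0pos.le (|f z₀|) hεpos
  set δ' : ℝ := min δ z₀ with hδ'
  have hδ'pos : 0 < δ' := lt_min hδpos hz0pos
  set U : Set ℝ := Set.Ioo (z₀ - δ') (z₀ + δ') with hU
  have hUsub : U ⊆ Set.Ioi 0 := by
    intro z hz
    have : z₀ - δ' ≥ 0 := by
      have : δ' ≤ z₀ := min_le_right _ _
      linarith
    exact lt_of_le_of_lt this hz.1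
  have hUne : ∀ z ∈ U, H₁ z ≠ H₂ z := by
    intro z hz hcontra
    have hzIci : z ∈ Set.Ici (0:ℝ) := Set.mem_Ici.mpr (le_of_lt (Set.mem_Ioi.mp (hUsub hz)))
    have hdist : dist z z₀ < δ := by
      rw [Real.dist_eq, abs_lt]
      constructor
      · have := hz.1; have : z₀ - δ' < z := hz.1
        have hle : δ' ≤ δ := min_le_left _ _
        linarith [hz.1]
      · have hle : δ' ≤ δ := min_le_left _ _
        linarith [hz.2]
    have := hδ z hzIci hdist
    rw [Real.dist_eq] at this
    have hfz : f z = 0 := sub_eq_zero.mpr hcontra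
    rw [hfz, zero_sub, abs_neg] at this
    exact absurd this (lt_irrefl _)
  have hU0 : μF U = 0 := by
    rw [ae_iff] at hae
    have h1 : μF.restrict (Set.Ioi 0) U ≤ μF.restrict (Set.Ioi 0) {z | ¬ H₁ z = H₂ z} :=
      measure_mono (fun z hz => hUne z hz)
    rw [Measure.restrict_apply measurableSet_Ioo, Set.inter_eq_left.mpr hUsub] at h1
    exact le_antisymm (h1.trans hae.le) zero_le
  have hUpos : 0 < μF U :=
    hsupp U isOpen_Ioo ⟨z₀, ⟨by constructor <;> [linarith; linarith], hz₀⟩⟩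
  exact absurd hU0 hUpos.ne'

/-- if the topological support of μ_F is [0,∞), the minimizer of J_a
over 𝒜 is unique (as a function on [0,∞)). -/
theorem stmt_8
    (F Fhat : StieltjesFunction ℝ) (g : ℝ → ℝ) (θ0 θ : ℝ)
    (hF_neg : ∀ z : ℝ, z < 0 → F z = 0)
    (hF_top : Tendsto (fun z => F z) atTop (nhds 1))
    (hg_mono : MonotoneOn g (Set.Icc 0 1))
    (hg_left : ∀ p ∈ Set.Ioc (0:ℝ) 1, Tendsto g (nhdsWithin p (Set.Iio p)) (nhds (g p)))
    (hg_zero : g 0 = 0)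
    (hg_zero' : Tendsto g (nhdsWithin 0 (Set.Ioi 0)) (nhds 0))
    (hg_one : g 1 = 1)
    (hg_pos : 0 < g (1 - F 0))
    (hθ0 : -1 < θ0)
    (hθ : θ = (1 + θ0) * g (1 - F 0) - 1)
    (hFhat : ∀ z : ℝ, Fhat z = if z < 0 then 0 else 1 - g (1 - F z) / g (1 - F 0))
    (hFhat_top : Tendsto (fun z => Fhat z) atTop (nhds 1))
    (hfin : ENNReal.ofReal (1 + θ) *
        (∫⁻ z in Set.Ioi (0:ℝ), ENNReal.ofReal z ∂Fhat.measure) < ⊤)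
    (hsupp : ∀ U : Set ℝ, IsOpen U → (U ∩ Set.Ici 0).Nonempty → 0 < F.measure U) :
    ∀ a ∈ Set.Ioi (0:ℝ), ∀ H₁ ∈ Adm, ∀ H₂ ∈ Adm,
      Jfun F.measure Fhat.measure θ a H₁ = vfun F.measure Fhat.measure θ a →
      Jfun F.measure Fhat.measure θ a H₂ = vfun F.measure Fhat.measure θ a →
      ∀ z : ℝ, 0 ≤ z → H₁ z = H₂ z := by
  intro a ha H₁ hH₁ H₂ hH₂ hJ₁ hJ₂
  set μF := F.measure with hμF
  set μG := Fhat.measure with hμG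
  have ha' : (0:ℝ) < a := ha
  set c : ℝ≥0∞ := ENNReal.ofReal (1 + θ) with hc
  -- midpoint
  set M : ℝ → ℝ := fun z => (H₁ z + H₂ z) / 2 with hM
  have hHM : M ∈ Adm := adm_avg_aux hH₁ hH₂
  have c1 : ContinuousOn H₁ (Set.Ici 0) := hH₁.2.2.2.continuousOn
  have c2 : ContinuousOn H₂ (Set.Ici 0) := hH₂.2.2.2.continuousOn
  have cM : ContinuousOn M (Set.Ici 0) := hHM.2.2.2.continuousOn
  -- measurability helpers
  have mz : ∀ (μ : Measure ℝ) (H : ℝ → ℝ), ContinuousOn H (Set.Ici 0) →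
      AEMeasurable H (μ.restrict (Set.Ioi 0)) := by
    intro μ H hcH
    exact ((hcH.mono Set.Ioi_subset_Ici_self).aemeasurable measurableSet_Ioi)
  have mf : ∀ (H : ℝ → ℝ), ContinuousOn H (Set.Ici 0) →
      AEMeasurable (fun z => ENNReal.ofReal (a / 2 * H z ^ 2 + H z)) (μF.restrict (Set.Ioi 0)) := by
    intro H hcH
    exact ENNReal.measurable_ofReal.comp_aemeasurable
      ((aemeasurable_const.mul ((mz μF H hcH).pow aemeasurable_const)).add (mz μF H hcH))
  have mD : AEMeasurable (fun z => ENNReal.ofReal (a / 8 * (H₁ z - H₂ z) ^ 2))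
      (μF.restrict (Set.Ioi 0)) :=
    ENNReal.measurable_ofReal.comp_aemeasurable
      (aemeasurable_const.mul (((mz μF H₁ c1).sub (mz μF H₂ c2)).pow aemeasurable_const))
  have mg : ∀ (H : ℝ → ℝ), ContinuousOn H (Set.Ici 0) →
      AEMeasurable (fun z => ENNReal.ofReal (H z)) (μG.restrict (Set.Ioi 0)) := by
    intro H hcH
    exact ENNReal.measurable_ofReal.comp_aemeasurable (mz μG H hcH)
  -- abbreviations
  set A₁ : ℝ≥0∞ := ∫⁻ z in Set.Ioi (0:ℝ), ENNReal.ofReal (a / 2 * H₁ z ^ 2 + H₁ z) ∂μF with hA₁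
  set A₂ : ℝ≥0∞ := ∫⁻ z in Set.Ioi (0:ℝ), ENNReal.ofReal (a / 2 * H₂ z ^ 2 + H₂ z) ∂μF with hA₂
  set AM : ℝ≥0∞ := ∫⁻ z in Set.Ioi (0:ℝ), ENNReal.ofReal (a / 2 * M z ^ 2 + M z) ∂μF with hAM
  set ID : ℝ≥0∞ := ∫⁻ z in Set.Ioi (0:ℝ), ENNReal.ofReal (a / 8 * (H₁ z - H₂ z) ^ 2) ∂μF with hID
  set B₁ : ℝ≥0∞ := ∫⁻ z in Set.Ioi (0:ℝ), ENNReal.ofReal (H₁ z) ∂μG with hB₁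
  set B₂ : ℝ≥0∞ := ∫⁻ z in Set.Ioi (0:ℝ), ENNReal.ofReal (H₂ z) ∂μG with hB₂
  set BM : ℝ≥0∞ := ∫⁻ z in Set.Ioi (0:ℝ), ENNReal.ofReal (M z) ∂μG with hBM
  -- B-integrals are finite
  have hBle : ∀ H : ℝ → ℝ, H ∈ Adm →
      (∫⁻ z in Set.Ioi (0:ℝ), ENNReal.ofReal (H z) ∂μG) ≤
        ∫⁻ z in Set.Ioi (0:ℝ), ENNReal.ofReal z ∂μG := by
    intro H hH
    refine lintegral_mono_ae ?_
    filter_upwards [ae_restrict_mem measurableSet_Ioi] with z hz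
    exact ENNReal.ofReal_le_ofReal (adm_le_self_aux hH (le_of_lt hz))
  have hBfin : ∀ H : ℝ → ℝ, H ∈ Adm →
      c * (∫⁻ z in Set.Ioi (0:ℝ), ENNReal.ofReal (H z) ∂μG) ≠ ⊤ :=
    fun H hH => ((mul_le_mul_right (hBle H hH) c).trans_lt hfin).ne
  -- v(a) ≤ 0
  have hJ0 : Jfun μF μG θ a (fun _ => 0) = (0 : EReal) := by
    simp [Jfun]
  have hv0 : vfun μF μG θ a ≤ 0 := by
    calc vfun μF μG θ a ≤ Jfun μF μG θ a (fun _ => 0) := iInf₂_le _ zero_mem_adm_aux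
      _ = 0 := hJ0
  -- the A-integrals of minimizers are finite
  have hAfin : ∀ H : ℝ → ℝ, H ∈ Adm → Jfun μF μG θ a H = vfun μF μG θ a →
      (∫⁻ z in Set.Ioi (0:ℝ), ENNReal.ofReal (a / 2 * H z ^ 2 + H z) ∂μF) ≠ ⊤ := by
    intro H hH hJ hTop
    have htop : Jfun μF μG θ a H = ⊤ := by
      rw [Jfun, hTop]
      rw [← coe_enn_aux _ (hBfin H hH)]
      rw [EReal.coe_ennreal_top, EReal.top_sub_coe]
    rw [hJ] at htop
    rw [htop] at hv0
    exact absurd hv0 (by simp)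
  have hA₁fin : A₁ ≠ ⊤ := hAfin H₁ hH₁ hJ₁
  have hA₂fin : A₂ ≠ ⊤ := hAfin H₂ hH₂ hJ₂
  -- key pointwise identity integrated: A₁ + A₂ = 2·AM + 2·ID
  have keyA : A₁ + A₂ = 2 * AM + 2 * ID := by
    rw [hA₁, hA₂, hAM, hID,
      ← lintegral_add_left' (mf H₁ c1) _,
      ← lintegral_const_mul' 2 _ ENNReal.ofNat_ne_top,
      ← lintegral_const_mul' 2 _ ENNReal.ofNat_ne_top,
      ← lintegral_add_left' ((mf M cM).const_mul 2) _]
    refine lintegral_congr_ae ?_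
    filter_upwards [ae_restrict_mem measurableSet_Ioi] with z hz
    have h1 : 0 ≤ H₁ z := hH₁.2.1 z (le_of_lt hz)
    have h2 : 0 ≤ H₂ z := hH₂.2.1 z (le_of_lt hz)
    have e1 : 0 ≤ a / 2 * H₁ z ^ 2 + H₁ z := by positivity
    have e2 : 0 ≤ a / 2 * H₂ z ^ 2 + H₂ z := by positivity
    have hMz : 0 ≤ a / 2 * M z ^ 2 + M z := by
      have : 0 ≤ M z := hHM.2.1 z (le_of_lt hz)
      positivity
    have hDz : 0 ≤ a / 8 * (H₁ z - H₂ z) ^ 2 := by positivity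
    have hr : a / 2 * H₁ z ^ 2 + H₁ z + (a / 2 * H₂ z ^ 2 + H₂ z)
        = 2 * (a / 2 * M z ^ 2 + M z) + 2 * (a / 8 * (H₁ z - H₂ z) ^ 2) := by
      simp only [hM]; ring
    rw [← ENNReal.ofReal_add e1 e2, hr,
      ENNReal.ofReal_add (by positivity) (by positivity),
      ENNReal.ofReal_mul (by norm_num : (0:ℝ) ≤ 2),
      ENNReal.ofReal_mul (by norm_num : (0:ℝ) ≤ 2),
      ENNReal.ofReal_ofNat]
  -- key identity for B: B₁ + B₂ = 2·BM
  have keyB : B₁ + B₂ = 2 * BM := by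
    rw [hB₁, hB₂, hBM,
      ← lintegral_add_left' (mg H₁ c1) _,
      ← lintegral_const_mul' 2 _ ENNReal.ofNat_ne_top]
    refine lintegral_congr_ae ?_
    filter_upwards [ae_restrict_mem measurableSet_Ioi] with z hz
    have h1 : 0 ≤ H₁ z := hH₁.2.1 z (le_of_lt hz)
    have h2 : 0 ≤ H₂ z := hH₂.2.1 z (le_of_lt hz)
    have hr : H₁ z + H₂ z = 2 * M z := by simp only [hM]; ring
    rw [← ENNReal.ofReal_add h1 h2, hr,
      ENNReal.ofReal_mul (by norm_num : (0:ℝ) ≤ 2), ENNReal.ofReal_ofNat]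
  -- finiteness of AM and ID
  have hsumfin : 2 * AM + 2 * ID ≠ ⊤ := by
    rw [← keyA]; exact ENNReal.add_ne_top.mpr ⟨hA₁fin, hA₂fin⟩
  have hAMfin : AM ≠ ⊤ := by
    intro h; rw [h] at hsumfin; simp [ENNReal.mul_top] at hsumfin
  have hIDfin : ID ≠ ⊤ := by
    intro h; rw [h] at hsumfin; simp [ENNReal.mul_top] at hsumfin
  have hB₁fin : c * B₁ ≠ ⊤ := hBfin H₁ hH₁
  have hB₂fin : c * B₂ ≠ ⊤ := hBfin H₂ hH₂
  have hBMfin : c * BM ≠ ⊤ := hBfin M hHM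
  -- real versions
  set α₁ : ℝ := A₁.toReal
  set α₂ : ℝ := A₂.toReal
  set αM : ℝ := AM.toReal
  set δ : ℝ := ID.toReal
  set β₁ : ℝ := (c * B₁).toReal
  set β₂ : ℝ := (c * B₂).toReal
  set βM : ℝ := (c * BM).toReal
  have hδnn : 0 ≤ δ := ENNReal.toReal_nonneg
  have keyAr : α₁ + α₂ = 2 * αM + 2 * δ := by
    have := congrArg ENNReal.toReal keyA
    rwa [ENNReal.toReal_add hA₁fin hA₂fin,
      ENNReal.toReal_add (by exact ENNReal.mul_ne_top ENNReal.ofNat_ne_top hAMfin)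
        (by exact ENNReal.mul_ne_top ENNReal.ofNat_ne_top hIDfin),
      ENNReal.toReal_mul, ENNReal.toReal_mul, ENNReal.toReal_ofNat] at this
  have keyBr : β₁ + β₂ = 2 * βM := by
    have hk : c * B₁ + c * B₂ = 2 * (c * BM) := by
      rw [← mul_add, keyB]; ring
    have := congrArg ENNReal.toReal hk
    rwa [ENNReal.toReal_add hB₁fin hB₂fin, ENNReal.toReal_mul (a := 2),
      ENNReal.toReal_ofNat] at this
  -- Jfun values as real coercions
  have hJcoe : ∀ (H : ℝ → ℝ),
      (∫⁻ z in Set.Ioi (0:ℝ), ENNReal.ofReal (a / 2 * H z ^ 2 + H z) ∂μF) ≠ ⊤ →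
      c * (∫⁻ z in Set.Ioi (0:ℝ), ENNReal.ofReal (H z) ∂μG) ≠ ⊤ →
      Jfun μF μG θ a H =
        ((((∫⁻ z in Set.Ioi (0:ℝ), ENNReal.ofReal (a / 2 * H z ^ 2 + H z) ∂μF).toReal
          - (c * ∫⁻ z in Set.Ioi (0:ℝ), ENNReal.ofReal (H z) ∂μG).toReal : ℝ)) : EReal) := by
    intro H hA hB
    rw [Jfun]
    exact ereal_sub_coe_aux _ _ hA hB
  have hJ₁coe : Jfun μF μG θ a H₁ = ((α₁ - β₁ : ℝ) : EReal) := hJcoe H₁ hA₁fin hB₁fin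
  have hJ₂coe : Jfun μF μG θ a H₂ = ((α₂ - β₂ : ℝ) : EReal) := hJcoe H₂ hA₂fin hB₂fin
  have hJMcoe : Jfun μF μG θ a M = ((αM - βM : ℝ) : EReal) := hJcoe M hAMfin hBMfin
  -- optimality of H₁, H₂ against M
  have hvM : vfun μF μG θ a ≤ Jfun μF μG θ a M := iInf₂_le _ hHM
  have hle1 : (α₁ - β₁ : ℝ) ≤ (αM - βM : ℝ) := by
    have := hJ₁.le.trans hvM
    rw [hJ₁coe, hJMcoe] at this
    exact_mod_cast this
  have hle2 : (α₂ - β₂ : ℝ) ≤ (αM - βM : ℝ) := by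
    have := hJ₂.le.trans hvM
    rw [hJ₂coe, hJMcoe] at this
    exact_mod_cast this
  -- conclude δ = 0
  have hδ0 : δ = 0 := by linarith
  have hID0 : ID = 0 := by
    rcases ENNReal.toReal_eq_zero_iff ID |>.mp hδ0 with h | h
    · exact h
    · exact absurd h hIDfin
  -- a.e. equality of H₁, H₂
  have hae : ∀ᵐ z ∂μF.restrict (Set.Ioi 0), H₁ z = H₂ z := by
    have h0 := (lintegral_eq_zero_iff' mD).mp hID0
    filter_upwards [h0] with z hz
    simp only [Pi.zero_apply, ENNReal.ofReal_eq_zero] at hz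
    have h8 : 0 < a / 8 := by linarith
    have hsq : (H₁ z - H₂ z) ^ 2 ≤ 0 := by
      by_contra h
      push_neg at h
      nlinarith [mul_pos h8 h]
    have hzq : (H₁ z - H₂ z) ^ 2 = 0 := le_antisymm hsq (sq_nonneg _)
    have := pow_eq_zero_iff (n := 2) (by norm_num) |>.mp hzq
    linarith [sub_eq_zero.mp this]
  exact eq_of_ae_aux μF hsupp c1 c2 (by rw [hH₁.1, hH₂.1]) hae
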